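/- Suppose the norm ν on E is order continuous and E is a KB-space, i.e., every increasing sequence (x_n) in E with 0 ≤ x_n and sup_n ν(x_n) < ∞ converges in ν-norm to some element of E. Then E^t is a KB-space with respect to ρ: every increasing sequence (x_n) in E^t with 0 ≤ x_n and sup_n ρ(x_n) < ∞ converges in ρ-norm to some element of E^t. -/

import Mathlib

set_option maxHeartbeats 1000000 in
theorem stmt4
    {G : Type*} [Lattice G] [AddCommGroup G] [Module ℝ G]
    [CovariantClass G G (· + ·) (· ≤ ·)] [PosSMulMono ℝ G]
    (arch : ∀ x y : G, (∀ n : ℕ, n • x ≤ y) → x ≤ 0)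
    (E : Set G)
    (hE0 : (0 : G) ∈ E)
    (hEadd : ∀ x ∈ E, ∀ y ∈ E, x + y ∈ E)
    (hEsmul : ∀ (c : ℝ), ∀ x ∈ E, c • x ∈ E)
    (hEsup : ∀ x ∈ E, ∀ y ∈ E, x ⊔ y ∈ E)
    (hEinf : ∀ x ∈ E, ∀ y ∈ E, x ⊓ y ∈ E)
    (hdense : ∀ x : G, 0 < x → ∃ y ∈ E, 0 < y ∧ y ≤ x)
    (hmaj : ∀ x : G, ∃ y ∈ E, x ≤ y)
    (ν : G → ℝ)
    (hν_zero : ∀ x ∈ E, (ν x = 0 ↔ x = 0))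
    (hν_smul : ∀ (c : ℝ), ∀ x ∈ E, ν (c • x) = |c| * ν x)
    (hν_add : ∀ x ∈ E, ∀ y ∈ E, ν (x + y) ≤ ν x + ν y)
    (hν_mono : ∀ x ∈ E, ∀ y ∈ E, |x| ≤ |y| → ν x ≤ ν y)
    (ρ : G → ℝ)
    (hρ : ∀ x : G, ρ x = sSup (ν '' {z | z ∈ E ∧ 0 ≤ z ∧ z ≤ |x|}))
    (ι : G → ℝ)
    (hι : ∀ x : G, ι x = sInf (ν '' {y | y ∈ E ∧ |x| ≤ y}))
    (Et : Set G)
    (hEEt : E ⊆ Et)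
    (hEtadd : ∀ x ∈ Et, ∀ y ∈ Et, x + y ∈ Et)
    (hEtsmul : ∀ (c : ℝ), ∀ x ∈ Et, c • x ∈ Et)
    (hEtsup : ∀ x ∈ Et, ∀ y ∈ Et, x ⊔ y ∈ Et)
    (hEtinf : ∀ x ∈ Et, ∀ y ∈ Et, x ⊓ y ∈ Et)
    (hEt : ∀ x ∈ Et, ι x = ρ x)
    (hoc : ∀ D : Set G, D.Nonempty → D ⊆ E → (∀ d ∈ D, 0 ≤ d) →
      DirectedOn (· ≥ ·) D → IsGLB D 0 → sInf (ν '' D) = 0)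
    (hKB : ∀ x : ℕ → G, (∀ n, x n ∈ E) → (∀ n, 0 ≤ x n) → Monotone x →
      BddAbove (Set.range fun n => ν (x n)) →
      ∃ l ∈ E, Filter.Tendsto (fun n => ν (x n - l)) Filter.atTop (nhds 0)) :
    ∀ x : ℕ → G, (∀ n, x n ∈ Et) → (∀ n, 0 ≤ x n) → Monotone x →
      BddAbove (Set.range fun n => ρ (x n)) →
      ∃ l ∈ Et, Filter.Tendsto (fun n => ρ (x n - l)) Filter.atTop (nhds 0) := by

  intro x hxEt hx0 hxmono hxbdd
  have hEneg : ∀ a ∈ E, -a ∈ E := fun a ha => by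
    simpa using hEsmul (-1) a ha
  have hEsub : ∀ a ∈ E, ∀ b ∈ E, a - b ∈ E := fun a ha b hb => by
    simpa [sub_eq_add_neg] using hEadd a ha (-b) (hEneg b hb)
  have hEabs : ∀ a ∈ E, |a| ∈ E := fun a ha => by
    have h := hEsup a ha (-a) (hEneg a ha)
    simpa [abs] using h
  have hν0 : ν 0 = 0 := (hν_zero 0 hE0).mpr rfl
  have hνabs : ∀ a ∈ E, ν |a| = ν a := fun a ha => by
    have h1 := hν_mono |a| (hEabs a ha) a ha (by simp [abs_abs])
    have h2 := hν_mono a ha |a| (hEabs a ha) (by simp [abs_abs])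
    linarith
  have hsetne : ∀ a : G, ((ν '' {z | z ∈ E ∧ 0 ≤ z ∧ z ≤ |a|})).Nonempty :=
    fun a => ⟨ν 0, 0, ⟨hE0, le_refl 0, abs_nonneg a⟩, rfl⟩
  have hbddA : ∀ a : G, BddAbove (ν '' {z | z ∈ E ∧ 0 ≤ z ∧ z ≤ |a|}) := by
    intro a
    obtain ⟨y, hyE, hy⟩ := hmaj |a|
    refine ⟨ν y, ?_⟩
    rintro t ⟨z, ⟨hzE, hz0, hza⟩, rfl⟩
    refine hν_mono z hzE y hyE ?_
    rw [abs_of_nonneg hz0, abs_of_nonneg (le_trans (abs_nonneg a) hy)]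
    exact le_trans hza hy
  have hρ_nonneg : ∀ a, 0 ≤ ρ a := fun a => by
    rw [hρ]
    have h := le_csSup (hbddA a) ⟨0, ⟨hE0, le_refl 0, abs_nonneg a⟩, rfl⟩
    simpa [hν0] using h
  have hν_le_ρ : ∀ a : G, ∀ z ∈ E, 0 ≤ z → z ≤ |a| → ν z ≤ ρ a := fun a z hz h0 hza => by
    rw [hρ]; exact le_csSup (hbddA a) ⟨z, ⟨hz, h0, hza⟩, rfl⟩
  have hρ_le : ∀ a : G, ∀ y ∈ E, |a| ≤ y → ρ a ≤ ν y := fun a y hy hay => by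
    rw [hρ]
    refine csSup_le (hsetne a) ?_
    rintro t ⟨z, ⟨hzE, hz0, hza⟩, rfl⟩
    refine hν_mono z hzE y hy ?_
    rw [abs_of_nonneg hz0, abs_of_nonneg (le_trans (abs_nonneg a) hay)]
    exact le_trans hza hay
  have hρ_mono : ∀ a b : G, 0 ≤ a → a ≤ b → ρ a ≤ ρ b := fun a b h0 hab => by
    rw [hρ a]
    refine csSup_le (hsetne a) ?_
    rintro t ⟨z, ⟨hzE, hz0, hza⟩, rfl⟩
    refine hν_le_ρ b z hzE hz0 (le_trans hza ?_)
    rw [abs_of_nonneg h0, abs_of_nonneg (h0.trans hab)]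
    exact hab
  have hnsmulE : ∀ (n : ℕ), ∀ a ∈ E, n • a ∈ E := by
    intro n a ha
    have h := hEsmul (n : ℝ) a ha
    rwa [Nat.cast_smul_eq_nsmul] at h
  -- sup of E-elements below a equals a (in upper-bound form)
  have hsupE : ∀ a b : G, 0 ≤ a → (∀ z ∈ E, 0 ≤ z → z ≤ a → z ≤ b) → a ≤ b := by
    intro a b ha0 hub
    by_contra hab
    have h1 : a ⊓ b ≤ a := inf_le_left
    have hd0 : 0 ≤ a - a ⊓ b := sub_nonneg.mpr h1
    have hd : 0 < a - a ⊓ b := by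
      rcases hd0.lt_or_eq with h | h
      · exact h
      · exfalso
        apply hab
        have h2 : a = a ⊓ b := eq_of_sub_eq_zero h.symm
        calc a = a ⊓ b := h2
          _ ≤ b := inf_le_right
    obtain ⟨w, hwE, hw0, hwd⟩ := hdense _ hd
    have key : ∀ n : ℕ, n • w ≤ a := by
      intro n; induction n with
      | zero => simpa using ha0
      | succ n ih =>
        have hwn0 : 0 ≤ n • w := nsmul_nonneg hw0.le n
        have hb : n • w ≤ b := hub _ (hnsmulE n w hwE) hwn0 ih
        have hinf : n • w ≤ a ⊓ b := le_inf ih hb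
        have h2 : n • w + w ≤ a := by
          calc n • w + w ≤ a ⊓ b + (a - a ⊓ b) := add_le_add hinf hwd
            _ = a := by abel
        rw [succ_nsmul]
        exact h2
    exact absurd (arch w a key) hw0.not_ge
  -- approximation lemma
  have happrox : ∀ a : G, 0 ≤ a → ∀ ε : ℝ, 0 < ε →
      ∃ z ∈ E, 0 ≤ z ∧ z ≤ a ∧ ρ (a - z) < ε := by
    intro a ha0 ε hε
    obtain ⟨y0, hy0E, hy0⟩ := hmaj a
    set D : Set G := {d | ∃ y, y ∈ E ∧ a ≤ y ∧ ∃ z, z ∈ E ∧ 0 ≤ z ∧ z ≤ a ∧ d = y - z} with hD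
    have hDne : D.Nonempty := ⟨y0 - 0, y0, hy0E, hy0, 0, hE0, le_refl 0, ha0, rfl⟩
    have hDE : D ⊆ E := by
      rintro d ⟨y, hyE, hay, z, hzE, hz0, hza, rfl⟩
      exact hEsub y hyE z hzE
    have hDpos : ∀ d ∈ D, 0 ≤ d := by
      rintro d ⟨y, hyE, hay, z, hzE, hz0, hza, rfl⟩
      exact sub_nonneg.mpr (hza.trans hay)
    have hDdir : DirectedOn (· ≥ ·) D := by
      rintro d1 ⟨y1, hy1, hay1, z1, hz1, h01, hza1, rfl⟩ d2 ⟨y2, hy2, hay2, z2, hz2, h02, hza2, rfl⟩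
      refine ⟨(y1 ⊓ y2) - (z1 ⊔ z2), ⟨y1 ⊓ y2, hEinf _ hy1 _ hy2, le_inf hay1 hay2,
        z1 ⊔ z2, hEsup _ hz1 _ hz2, le_trans h01 le_sup_left, sup_le hza1 hza2, rfl⟩, ?_, ?_⟩
      · exact sub_le_sub inf_le_left le_sup_left
      · exact sub_le_sub inf_le_right le_sup_right
    have hglb : IsGLB D 0 := by
      constructor
      · intro d hd; exact hDpos d hd
      · intro u hu
        have hupos : ∀ y ∈ E, a ≤ y → a + u ⊔ 0 ≤ y := by
          intro y hyE hay
          have h1 : ∀ z ∈ E, 0 ≤ z → z ≤ a → z ≤ y - u ⊔ 0 := by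
            intro z hzE hz0 hza
            have hdle : u ≤ y - z := hu ⟨y, hyE, hay, z, hzE, hz0, hza, rfl⟩
            have h0yz : (0 : G) ≤ y - z := sub_nonneg.mpr (hza.trans hay)
            have hsle : u ⊔ 0 ≤ y - z := sup_le hdle h0yz
            exact le_sub_comm.mp hsle
          have h2 := hsupE a (y - u ⊔ 0) ha0 h1
          exact le_sub_iff_add_le.mp h2
        by_contra hu0
        have hpos : 0 < u ⊔ 0 := by
          rcases (le_sup_right : (0:G) ≤ u ⊔ 0).lt_or_eq with h | h
          · exact h
          · exact absurd (sup_eq_right.mp h.symm) hu0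
        obtain ⟨w, hwE, hw0, hwu⟩ := hdense _ hpos
        have key : ∀ n : ℕ, a + n • w ≤ y0 := by
          intro n; induction n with
          | zero => simpa using hy0
          | succ n ih =>
            have hyE' : y0 - n • w ∈ E := hEsub _ hy0E _ (hnsmulE n w hwE)
            have hay' : a ≤ y0 - n • w := le_sub_iff_add_le.mpr ih
            have h3 : a + u ⊔ 0 ≤ y0 - n • w := hupos _ hyE' hay'
            have h4 : a + w ≤ y0 - n • w := le_trans (add_le_add_right hwu a) h3
            have h5 : a + w + n • w ≤ y0 := le_sub_iff_add_le.mp h4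
            calc a + (n + 1) • w = a + w + n • w := by rw [succ_nsmul]; abel
              _ ≤ y0 := h5
        have harch : ∀ n : ℕ, n • w ≤ y0 - a := by
          intro n
          rw [le_sub_iff_add_le, add_comm]
          exact key n
        exact absurd (arch w (y0 - a) harch) hw0.not_ge
    have hinf := hoc D hDne hDE hDpos hDdir hglb
    have hex : ∃ d ∈ D, ν d < ε := by
      by_contra h
      push_neg at h
      have hle : ε ≤ sInf (ν '' D) := by
        refine le_csInf (hDne.image ν) ?_
        rintro t ⟨d, hd, rfl⟩
        exact h d hd
      rw [hinf] at hle
      linarith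
    obtain ⟨d, ⟨y, hyE, hay, z, hzE, hz0, hza, rfl⟩, hdν⟩ := hex
    refine ⟨z, hzE, hz0, hza, ?_⟩
    have hle2 : ρ (a - z) ≤ ν (y - z) := by
      refine hρ_le _ _ (hEsub y hyE z hzE) ?_
      rw [abs_of_nonneg (sub_nonneg.mpr hza)]
      exact sub_le_sub_right hay z
    linarith
  -- construct the approximating sequence in E
  have hchoice : ∀ n : ℕ, ∃ zz ∈ E, 0 ≤ zz ∧ zz ≤ x n ∧ ρ (x n - zz) < 1 / ((n : ℝ) + 1) :=
    fun n => happrox (x n) (hx0 n) (1 / ((n : ℝ) + 1)) (by positivity)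
  choose z hzE hz0 hzle hzρ using hchoice
  set w : ℕ → G := fun n => partialSups z n with hwdef
  have hwE : ∀ n, w n ∈ E := by
    intro n; induction n with
    | zero => simpa [hwdef] using hzE 0
    | succ n ih =>
      have h := hEsup _ ih _ (hzE (n + 1))
      simpa [hwdef, partialSups_succ] using h
  have hwz : ∀ n, z n ≤ w n := fun n => le_partialSups z n
  have hw0 : ∀ n, 0 ≤ w n := fun n => le_trans (hz0 n) (hwz n)
  have hwx : ∀ n, w n ≤ x n := by
    intro n
    refine partialSups_le z n (x n) (fun k hk => (hzle k).trans (hxmono hk))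
  have hwmono : Monotone w := (partialSups z).monotone
  obtain ⟨M, hM⟩ := hxbdd
  have hMb : ∀ n, ρ (x n) ≤ M := fun n => hM ⟨n, rfl⟩
  have hνw : BddAbove (Set.range fun n => ν (w n)) := by
    refine ⟨M, ?_⟩
    rintro t ⟨n, rfl⟩
    refine le_trans (hν_le_ρ (x n) (w n) (hwE n) (hw0 n) ?_) (hMb n)
    rw [abs_of_nonneg (hx0 n)]
    exact hwx n
  obtain ⟨l, hlE, hl⟩ := hKB w hwE hw0 hwmono hνw
  refine ⟨l, hEEt hlE, ?_⟩
  have hbound : ∀ n, ρ (x n - l) ≤ ν (w n - l) + 1 / ((n : ℝ) + 1) := by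
    intro n
    have haEt : x n - w n ∈ Et := by
      have h := hEtadd (x n) (hxEt n) ((-1 : ℝ) • w n) (hEtsmul (-1) _ (hEEt (hwE n)))
      simpa [sub_eq_add_neg] using h
    have ha0 : 0 ≤ x n - w n := sub_nonneg.mpr (hwx n)
    have hstep : ρ (x n - l) - ν (w n - l) ≤ ι (x n - w n) := by
      rw [hι]
      refine le_csInf ?_ ?_
      · obtain ⟨y, hyE, hy⟩ := hmaj |x n - w n|
        exact ⟨ν y, y, ⟨hyE, hy⟩, rfl⟩
      · rintro t ⟨y, ⟨hyE, hy⟩, rfl⟩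
        have hwl : w n - l ∈ E := hEsub _ (hwE n) _ hlE
        have h1 : ρ (x n - l) ≤ ν (y + |w n - l|) := by
          refine hρ_le _ _ (hEadd y hyE _ (hEabs _ hwl)) ?_
          calc |x n - l| = |x n - w n + (w n - l)| := by rw [sub_add_sub_cancel]
            _ ≤ |x n - w n| + |w n - l| := abs_add_le _ _
            _ ≤ y + |w n - l| := add_le_add_left hy _
        have h2 : ν (y + |w n - l|) ≤ ν y + ν (w n - l) := by
          have h3 := hν_add y hyE _ (hEabs _ hwl)
          rwa [hνabs _ hwl] at h3
        linarith
    have hstep2 : ι (x n - w n) = ρ (x n - w n) := hEt _ haEt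
    have hstep3 : ρ (x n - w n) ≤ ρ (x n - z n) := hρ_mono _ _ ha0 (sub_le_sub_left (hwz n) _)
    have h4 := hzρ n
    linarith
  have h0b : ∀ n, 0 ≤ ρ (x n - l) := fun n => hρ_nonneg _
  have hg : Filter.Tendsto (fun n : ℕ => ν (w n - l) + 1 / ((n : ℝ) + 1)) Filter.atTop (nhds 0) := by
    have h2 : Filter.Tendsto (fun n : ℕ => 1 / ((n : ℝ) + 1)) Filter.atTop (nhds 0) :=
      tendsto_one_div_add_atTop_nhds_zero_nat
    simpa using hl.add h2
  exact squeeze_zero h0b hbound hg
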